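/- Let A^σ be a square integer matrix in block anti-diagonal form with blocks L₁, …, L_{k−2} along the anti-diagonal (L_i pairing block i against block k−1−i, each L_i square, with L_i and L_{k−1−i} of the same size), where k is odd. Then conjugating A^σ by the permutation matrix J = [[0, I_ν, 0],[I_μ, 0, 0],[0, 0, I_μ]] (where ν is the size of the middle block L_{(k−1)/2} and μ the total size of the blocks above the middle) yields the block-diagonal sum of L_{(k−1)/2} with the matrix [[0, C],[B, 0]], where B collects the blocks L_{(k+1)/2},…,L_{k−2} and C collects L₁,…,L_{(k−3)/2}. Consequently A^σ is cobordant to L_{(k−1)/2}. -/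
import Mathlib


open Matrix

/-- A square integer matrix is *null-cobordant* (Levine) if, after identifying
its index type with `Fin r ⊕ Fin r`, it is integrally congruent (`N ↦ P * N * Pᵀ`
with `P` invertible over `ℤ`) to a matrix whose upper-left `r × r` block is zero. -/
def NullCobordant {n : Type*} [Fintype n] [DecidableEq n] (N : Matrix n n ℤ) : Prop :=
  ∃ (r : ℕ) (e : n ≃ Fin r ⊕ Fin r) (P : Matrix n n ℤ), IsUnit P.det ∧
    ∀ i j : Fin r, (P * N * Pᵀ) (e.symm (Sum.inl i)) (e.symm (Sum.inl j)) = 0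

/-- Two square integer matrices are cobordant if `A ⊞ (-B)` is null-cobordant. -/
def Cobordant {m n : Type*} [Fintype m] [DecidableEq m] [Fintype n] [DecidableEq n]
    (A : Matrix m m ℤ) (B : Matrix n n ℤ) : Prop :=
  NullCobordant (Matrix.fromBlocks A 0 0 (-B))

/-- The block anti-diagonal matrix with blocks `L i` in row-block `i`,
column-block `rev i` (sizes `d i`, where `d i = d (rev i)`). -/
def antiDiagBlocks {n : ℕ} (d : Fin n → ℕ) (hd : ∀ i, d i = d i.rev)
    (L : ∀ i, Matrix (Fin (d i)) (Fin (d i)) ℤ) :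
    Matrix ((i : Fin n) × Fin (d i)) ((i : Fin n) × Fin (d i)) ℤ :=
  fun p q =>
    if h : q.1 = p.1.rev then L p.1 p.2 (Fin.cast (by rw [h, ← hd p.1]) q.2) else 0

section Aux
variable (t : ℕ) (d : Fin (2 * t + 1) → ℕ)


def upIx (i : Fin t) : Fin (2 * t + 1) := ⟨i, by omega⟩

def betaIx := Σ i : Fin t, Fin (d (upIx t i))

instance : Fintype (betaIx t d) := by unfold betaIx; infer_instance
instance : DecidableEq (betaIx t d) := by unfold betaIx; infer_instance

def mySplit (hd : ∀ i, d i = d i.rev) (mid : Fin (2 * t + 1)) (hmid : (mid : ℕ) = t) :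
    ((i : Fin (2 * t + 1)) × Fin (d i)) ≃ (Fin (d mid) ⊕ (betaIx t d ⊕ betaIx t d)) where
  toFun p :=
    if h : (p.1 : ℕ) < t then
      Sum.inr (Sum.inl ⟨⟨p.1, h⟩, Fin.cast (congrArg d (Fin.ext rfl)) p.2⟩)
    else if h' : (p.1 : ℕ) = t then
      Sum.inl (Fin.cast (congrArg d (Fin.ext (by simp [hmid, h']))) p.2)
    else
      Sum.inr (Sum.inr ⟨⟨2 * t - p.1, by omega⟩,
        Fin.cast ((congrArg d (show p.1 = (upIx t ⟨2 * t - p.1, by omega⟩).rev from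
          Fin.ext (by simp only [upIx, Fin.val_rev]; omega))).trans (hd _).symm) p.2⟩)
  invFun q :=
    match q with
    | Sum.inl y => ⟨mid, y⟩
    | Sum.inr (Sum.inl ⟨j, x⟩) => ⟨upIx t j, x⟩
    | Sum.inr (Sum.inr ⟨j, x⟩) => ⟨(upIx t j).rev, Fin.cast (hd (upIx t j)) x⟩
  left_inv := by
    rintro ⟨i, x⟩
    by_cases h : (i : ℕ) < t
    · simp only [dif_pos h]
      exact Sigma.ext (Fin.ext rfl) ((Fin.heq_ext_iff (congrArg d (Fin.ext rfl)).symm).2 rfl)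
    · by_cases h' : (i : ℕ) = t
      · simp only [dif_neg h, dif_pos h']
        refine Sigma.ext (Fin.ext (by simp [hmid, h'])) ?_
        exact (Fin.heq_ext_iff (by congr 1; exact Fin.ext (by simp [hmid, h']))).2 rfl
      · simp only [dif_neg h, dif_neg h']
        refine Sigma.ext (Fin.ext (by simp only [upIx, Fin.val_rev]; omega)) ?_
        refine (Fin.heq_ext_iff (by congr 1; exact Fin.ext (by simp only [upIx, Fin.val_rev]; omega))).2 ?_
        rfl
  right_inv := by
    rintro (y | ⟨j, x⟩ | ⟨j, x⟩)
    · simp only [dif_neg (by omega : ¬ ((mid : ℕ) < t)), dif_pos hmid]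
      congr 1
    · simp only [dif_pos (show ((upIx t j : Fin (2*t+1)) : ℕ) < t from j.isLt)]
      congr 1
    · have hv : (((upIx t j).rev : Fin (2*t+1)) : ℕ) = 2 * t - (j : ℕ) := by
        simp only [upIx, Fin.val_rev]; omega
      have hj := j.isLt
      simp only [dif_neg (show ¬ (((upIx t j).rev : Fin (2*t+1)) : ℕ) < t by omega),
        dif_neg (show ¬ (((upIx t j).rev : Fin (2*t+1)) : ℕ) = t by omega)]
      congr 1
      refine congrArg Sum.inr (Sigma.ext ?_ ?_)
      · exact Fin.ext (show 2 * t - ((upIx t j).rev : ℕ) = (j : ℕ) by omega)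
      · exact (Fin.heq_ext_iff (congrArg d (Fin.ext
          (show 2 * t - ((upIx t j).rev : ℕ) = (j : ℕ) by omega)))).2 rfl

lemma mySplit_symm_inl (hd : ∀ i, d i = d i.rev) (mid : Fin (2 * t + 1)) (hmid : (mid : ℕ) = t)
    (y : Fin (d mid)) : (mySplit t d hd mid hmid).symm (Sum.inl y) = ⟨mid, y⟩ := rfl

lemma mySplit_symm_inrl (hd : ∀ i, d i = d i.rev) (mid : Fin (2 * t + 1)) (hmid : (mid : ℕ) = t)
    (a : betaIx t d) : (mySplit t d hd mid hmid).symm (Sum.inr (Sum.inl a)) = ⟨upIx t a.1, a.2⟩ := rfl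

lemma mySplit_symm_inrr (hd : ∀ i, d i = d i.rev) (mid : Fin (2 * t + 1)) (hmid : (mid : ℕ) = t)
    (a : betaIx t d) : (mySplit t d hd mid hmid).symm (Sum.inr (Sum.inr a)) =
      ⟨(upIx t a.1).rev, Fin.cast (hd (upIx t a.1)) a.2⟩ := rfl

lemma val_upIx (j : Fin t) : ((upIx t j : Fin (2 * t + 1)) : ℕ) = (j : ℕ) := rfl

lemma val_upIx_rev (j : Fin t) : (((upIx t j).rev : Fin (2 * t + 1)) : ℕ) = 2 * t - (j : ℕ) := by
  simp [upIx, Fin.val_rev]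

variable (hd : ∀ i, d i = d i.rev) (L : ∀ i, Matrix (Fin (d i)) (Fin (d i)) ℤ)
  (mid : Fin (2 * t + 1)) (hmid : (mid : ℕ) = t)

def Cmat : Matrix (betaIx t d) (betaIx t d) ℤ := fun a b =>
  antiDiagBlocks d hd L ((mySplit t d hd mid hmid).symm (Sum.inr (Sum.inl a)))
    ((mySplit t d hd mid hmid).symm (Sum.inr (Sum.inr b)))

def Bmat : Matrix (betaIx t d) (betaIx t d) ℤ := fun a b =>
  antiDiagBlocks d hd L ((mySplit t d hd mid hmid).symm (Sum.inr (Sum.inr a)))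
    ((mySplit t d hd mid hmid).symm (Sum.inr (Sum.inl b)))

lemma split_eq :
    Matrix.reindex (mySplit t d hd mid hmid) (mySplit t d hd mid hmid) (antiDiagBlocks d hd L) =
      Matrix.fromBlocks (L mid) 0 0
        (Matrix.fromBlocks 0 (Cmat t d hd L mid hmid) (Bmat t d hd L mid hmid) 0) := by
  have hrev : Fin.rev mid = mid := Fin.ext (by simp [Fin.val_rev]; omega)
  ext x y
  rcases x with y0 | a | a <;> rcases y with y1 | b | b <;>
    simp only [Matrix.reindex_apply, Matrix.submatrix_apply, mySplit_symm_inl,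
      mySplit_symm_inrl, mySplit_symm_inrr]
  · -- (inl, inl)
    show antiDiagBlocks d hd L ⟨mid, y0⟩ ⟨mid, y1⟩ = L mid y0 y1
    unfold antiDiagBlocks
    rw [dif_pos (show mid = Fin.rev mid from hrev.symm)]
    exact congrArg (L mid y0) (Fin.ext rfl)
  · -- (inl, inr inl)
    show antiDiagBlocks d hd L _ _ = (0 : Matrix _ _ ℤ) y0 b
    unfold antiDiagBlocks
    rw [dif_neg]
    · rfl
    · intro hcon
      have := congrArg Fin.val hcon
      rw [val_upIx, Fin.val_rev, hmid] at this
      have := b.1.isLt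
      omega
  · -- (inl, inr inr)
    show antiDiagBlocks d hd L _ _ = (0 : Matrix _ _ ℤ) y0 b
    unfold antiDiagBlocks
    rw [dif_neg]
    · rfl
    · intro hcon
      have := congrArg Fin.val hcon
      rw [val_upIx_rev, Fin.val_rev, hmid] at this
      have := b.1.isLt
      omega
  · -- (inr inl, inl)
    show antiDiagBlocks d hd L _ _ = (0 : Matrix _ _ ℤ) a y1
    unfold antiDiagBlocks
    rw [dif_neg]
    · rfl
    · intro hcon
      have := congrArg Fin.val hcon
      rw [hmid, val_upIx_rev] at this
      have := a.1.isLt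
      omega
  · -- (inr inl, inr inl)
    show antiDiagBlocks d hd L _ _ = (0 : Matrix _ _ ℤ) a b
    unfold antiDiagBlocks
    rw [dif_neg]
    · rfl
    · intro hcon
      have := congrArg Fin.val hcon
      rw [val_upIx, val_upIx_rev] at this
      have := a.1.isLt
      have := b.1.isLt
      omega
  · -- (inr inl, inr inr) : C entry
    rfl
  · -- (inr inr, inl)
    show antiDiagBlocks d hd L _ _ = (0 : Matrix _ _ ℤ) a y1
    unfold antiDiagBlocks
    rw [dif_neg]
    · rfl
    · intro hcon
      have := congrArg Fin.val hcon
      rw [hmid, Fin.rev_rev, val_upIx] at this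
      have := a.1.isLt
      omega
  · -- (inr inr, inr inl) : B entry
    rfl
  · -- (inr inr, inr inr)
    show antiDiagBlocks d hd L _ _ = (0 : Matrix _ _ ℤ) a b
    unfold antiDiagBlocks
    rw [dif_neg]
    · rfl
    · intro hcon
      have := congrArg Fin.val hcon
      rw [val_upIx_rev, Fin.rev_rev, val_upIx] at this
      have := a.1.isLt
      have := b.1.isLt
      omega

def shuffle (m γ : Type*) : (m ⊕ (γ ⊕ γ)) ⊕ m ≃ (m ⊕ γ) ⊕ (m ⊕ γ) where
  toFun
    | .inl (.inl i) => .inl (.inl i)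
    | .inl (.inr (.inl a)) => .inl (.inr a)
    | .inl (.inr (.inr a)) => .inr (.inr a)
    | .inr i => .inr (.inl i)
  invFun
    | .inl (.inl i) => .inl (.inl i)
    | .inl (.inr a) => .inl (.inr (.inl a))
    | .inr (.inl i) => .inr i
    | .inr (.inr a) => .inl (.inr (.inr a))
  left_inv := by rintro ((i | (a | a)) | i) <;> rfl
  right_inv := by rintro ((i | a) | (i | a)) <;> rfl

def fEquiv : ((i : Fin (2 * t + 1)) × Fin (d i)) ⊕ Fin (d mid) ≃
    (Fin (d mid) ⊕ betaIx t d) ⊕ (Fin (d mid) ⊕ betaIx t d) :=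
  (Equiv.sumCongr (mySplit t d hd mid hmid) (Equiv.refl (Fin (d mid)))).trans
    (shuffle (Fin (d mid)) (betaIx t d))

lemma fEquiv_symm_ll (i) : (fEquiv t d hd mid hmid).symm (.inl (.inl i)) =
    .inl ((mySplit t d hd mid hmid).symm (.inl i)) := rfl
lemma fEquiv_symm_lr (a) : (fEquiv t d hd mid hmid).symm (.inl (.inr a)) =
    .inl ((mySplit t d hd mid hmid).symm (.inr (.inl a))) := rfl
lemma fEquiv_symm_rl (i) : (fEquiv t d hd mid hmid).symm (.inr (.inl i)) = .inr i := rfl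
lemma fEquiv_symm_rr (a) : (fEquiv t d hd mid hmid).symm (.inr (.inr a)) =
    .inl ((mySplit t d hd mid hmid).symm (.inr (.inr a))) := rfl

lemma reindex_N :
    Matrix.reindex (fEquiv t d hd mid hmid) (fEquiv t d hd mid hmid)
      (Matrix.fromBlocks (antiDiagBlocks d hd L) 0 0 (-(L mid))) =
    Matrix.fromBlocks
      (Matrix.fromBlocks (L mid) 0 0 (0 : Matrix (betaIx t d) (betaIx t d) ℤ))
      (Matrix.fromBlocks 0 0 0 (Cmat t d hd L mid hmid))
      (Matrix.fromBlocks 0 0 0 (Bmat t d hd L mid hmid))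
      (Matrix.fromBlocks (-(L mid)) 0 0 (0 : Matrix (betaIx t d) (betaIx t d) ℤ)) := by
  have h1' : ∀ u v, antiDiagBlocks d hd L ((mySplit t d hd mid hmid).symm u)
      ((mySplit t d hd mid hmid).symm v) =
      Matrix.fromBlocks (L mid) 0 0
        (Matrix.fromBlocks 0 (Cmat t d hd L mid hmid) (Bmat t d hd L mid hmid) 0) u v :=
    fun u v => congrFun (congrFun (split_eq t d hd L mid hmid) u) v
  ext x y
  rcases x with (i | a) | (i | a) <;> rcases y with (j | b) | (j | b) <;>
    simp only [Matrix.reindex_apply, Matrix.submatrix_apply,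
      fEquiv_symm_ll, fEquiv_symm_lr, fEquiv_symm_rl, fEquiv_symm_rr,
      Matrix.fromBlocks_apply₁₁, Matrix.fromBlocks_apply₁₂,
      Matrix.fromBlocks_apply₂₁, Matrix.fromBlocks_apply₂₂, h1',
      Matrix.zero_apply, Matrix.neg_apply]

lemma nullCobordant_of_equiv {n α : Type*} [Fintype n] [DecidableEq n]
    [Fintype α] [DecidableEq α]
    (f : n ≃ α ⊕ α) (M : Matrix n n ℤ)
    (P : Matrix (α ⊕ α) (α ⊕ α) ℤ) (hP : IsUnit P.det)
    (h : ∀ i j : α, (P * (Matrix.reindex f f M) * Pᵀ) (Sum.inl i) (Sum.inl j) = 0) :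
    NullCobordant M := by
  classical
  let g := Fintype.equivFin α
  refine ⟨Fintype.card α, f.trans (g.sumCongr g), Matrix.reindex f.symm f.symm P, ?_, ?_⟩
  · rwa [Matrix.reindex_apply, Matrix.det_submatrix_equiv_self]
  · have key : Matrix.reindex f.symm f.symm P * M * (Matrix.reindex f.symm f.symm P)ᵀ
        = Matrix.reindex f.symm f.symm (P * Matrix.reindex f f M * Pᵀ) := by
      simp only [Matrix.reindex_apply, Matrix.transpose_submatrix, Equiv.symm_symm]
      conv_lhs => rw [show M = (M.submatrix ⇑f.symm ⇑f.symm).submatrix ⇑f ⇑f by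
        simp [Matrix.submatrix_submatrix]]
      rw [Matrix.submatrix_mul_equiv, Matrix.submatrix_mul_equiv]
    intro i j
    rw [key]
    simp only [Equiv.symm_trans_apply, Equiv.sumCongr_symm, Equiv.sumCongr_apply,
      Matrix.reindex_apply, Matrix.submatrix_apply, Equiv.symm_symm, Equiv.apply_symm_apply]
    exact h _ _

include hmid in
lemma cob : Cobordant (antiDiagBlocks d hd L) (L mid) := by
  classical
  unfold Cobordant
  refine nullCobordant_of_equiv (fEquiv t d hd mid hmid) _
    (Matrix.fromBlocks 1 (Matrix.fromBlocks 1 0 0 0) 0 1) ?_ ?_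
  · rw [Matrix.det_fromBlocks_zero₂₁]; simp
  · intro i j
    rw [reindex_N t d hd L mid hmid]
    simp only [Matrix.fromBlocks_transpose, Matrix.fromBlocks_multiply,
      Matrix.fromBlocks_add, Matrix.transpose_one, Matrix.transpose_zero,
      Matrix.one_mul, Matrix.mul_one, Matrix.zero_mul, Matrix.mul_zero,
      add_zero, zero_add,
      Matrix.fromBlocks_apply₁₁]
    rcases i with i | a <;> rcases j with j | b <;>
      simp [Matrix.fromBlocks_multiply, Matrix.fromBlocks_add]

end Aux

/-- For an odd number `2t+1` of anti-diagonal blocks, the matrix decomposes, after a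
permutation of indices, as the block sum of the middle block with a matrix of the
form `[[0, C],[B, 0]]`; consequently it is cobordant to its middle block. -/
theorem stmt9 (t : ℕ) (d : Fin (2 * t + 1) → ℕ) (hd : ∀ i, d i = d i.rev)
    (L : ∀ i, Matrix (Fin (d i)) (Fin (d i)) ℤ)
    (mid : Fin (2 * t + 1)) (hmid : (mid : ℕ) = t) :
    (∃ (β : Type) (_ : Fintype β) (_ : DecidableEq β)
        (e : ((i : Fin (2 * t + 1)) × Fin (d i)) ≃ (Fin (d mid) ⊕ (β ⊕ β)))
        (B C : Matrix β β ℤ),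
      Matrix.reindex e e (antiDiagBlocks d hd L) =
        Matrix.fromBlocks (L mid) 0 0 (Matrix.fromBlocks 0 C B 0)) ∧
    Cobordant (antiDiagBlocks d hd L) (L mid) :=
  ⟨⟨betaIx t d, inferInstance, inferInstance, mySplit t d hd mid hmid,
    Bmat t d hd L mid hmid, Cmat t d hd L mid hmid, split_eq t d hd L mid hmid⟩,
   cob t d hd L mid hmid⟩
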